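/- Every prefix p of a generalized fighting fish satisfies lat(p) ≥ 0 and long(p) ≥ 0; that is, viewed as a walk on Z², a generalized fighting fish is confined to the quarter plane {x ≥ 0, y ≥ 0}. -/
import Mathlib


/-- The four-letter alphabet of steps. -/
inductive Letter : Type
  | E | N | W | S
deriving DecidableEq, Repr

open Letter

/-- Fighting fish: words obtainable from `ENWS` by upper, lower and double gluings. -/
inductive IsFF : List Letter → Prop
  | base : IsFF [E, N, W, S]
  | upper (u v : List Letter) :
      IsFF (u ++ [W] ++ v) → IsFF (u ++ [N, W, S] ++ v)
  | lower (u v : List Letter) :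
      IsFF (u ++ [N] ++ v) → IsFF (u ++ [E, N, W] ++ v)
  | double (u v : List Letter) :
      IsFF (u ++ [W, N] ++ v) → IsFF (u ++ [N, W] ++ v)

/-- Generalized fighting fish: words obtainable from the empty word by the
operations `∇_k` (replace `N^k` by `E N^k W`) and `△_k` (replace `W^k` by `N W^k S`),
for `k ≥ 0`. -/
inductive IsGFF : List Letter → Prop
  | base : IsGFF []
  | nabla (u v : List Letter) (k : ℕ) :
      IsGFF (u ++ List.replicate k N ++ v) →
      IsGFF (u ++ [E] ++ List.replicate k N ++ [W] ++ v)
  | delta (u v : List Letter) (k : ℕ) :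
      IsGFF (u ++ List.replicate k W ++ v) →
      IsGFF (u ++ [N] ++ List.replicate k W ++ [S] ++ v)

/-- The latitude of a word: number of `N`'s minus number of `S`'s. -/
def lat (w : List Letter) : ℤ := (w.count N : ℤ) - (w.count S : ℤ)

/-- The longitude of a word: number of `E`'s minus number of `W`'s. -/
def long (w : List Letter) : ℤ := (w.count E : ℤ) - (w.count W : ℤ)

/-- The size of a word: half its length. -/
def size (w : List Letter) : ℕ := w.length / 2

lemma prefix_split {α : Type*} (u : List α) {v p : List α} (h : p <+: u ++ v) :
    p <+: u ∨ ∃ q, q <+: v ∧ p = u ++ q := by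
  induction u generalizing p with
  | nil => exact Or.inr ⟨p, by simpa using h, by simp⟩
  | cons a u ih =>
    cases p with
    | nil => exact Or.inl (List.nil_prefix)
    | cons b p =>
      rw [List.cons_append, List.cons_prefix_cons] at h
      obtain ⟨rfl, h⟩ := h
      rcases ih h with h' | ⟨q, hq, rfl⟩
      · exact Or.inl (by simpa [List.cons_prefix_cons] using h')
      · exact Or.inr ⟨q, hq, rfl⟩

lemma prefix_replicate {α : Type*} {a : α} {k : ℕ} {q : List α}
    (h : q <+: List.replicate k a) : ∃ j ≤ k, q = List.replicate j a := by
  refine ⟨q.length, by simpa using h.length_le, ?_⟩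
  exact List.eq_replicate_of_mem fun x hx => List.eq_of_mem_replicate (h.subset hx)

lemma prefix_single {α : Type*} {a : α} {q : List α} (h : q <+: [a]) :
    q = [] ∨ q = [a] := by
  have : [a] = List.replicate 1 a := rfl
  rw [this] at h
  obtain ⟨j, hj, rfl⟩ := prefix_replicate h
  interval_cases j <;> simp

lemma lat_append (a b : List Letter) : lat (a ++ b) = lat a + lat b := by
  simp [lat, List.count_append]; ring
lemma long_append (a b : List Letter) : long (a ++ b) = long a + long b := by
  simp [long, List.count_append]; ring
lemma lat_repl_N (k : ℕ) : lat (List.replicate k N) = k := by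
  simp [lat, List.count_replicate]
lemma long_repl_N (k : ℕ) : long (List.replicate k N) = 0 := by
  simp [long, List.count_replicate]
lemma lat_repl_W (k : ℕ) : lat (List.replicate k W) = 0 := by
  simp [lat, List.count_replicate]
lemma long_repl_W (k : ℕ) : long (List.replicate k W) = -(k : ℤ) := by
  simp [long, List.count_replicate]
lemma lat_nil : lat [] = 0 := by decide
lemma long_nil : long [] = 0 := by decide
lemma lat_E : lat [E] = 0 := by decide
lemma long_E : long [E] = 1 := by decide
lemma lat_Nl : lat [N] = 1 := by decide
lemma long_Nl : long [N] = 0 := by decide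
lemma lat_W : lat [W] = 0 := by decide
lemma long_W : long [W] = -1 := by decide
lemma lat_S : lat [S] = -1 := by decide
lemma long_S : long [S] = 0 := by decide

lemma repl_split {α : Type*} {a : α} {j k : ℕ} (h : j ≤ k) :
    List.replicate j a ++ List.replicate (k - j) a = List.replicate k a := by
  rw [← List.replicate_add]; congr 1; omega


/-- Every prefix of a generalized fighting fish has nonnegative latitude and
longitude: the associated walk is confined to the quarter plane `{x ≥ 0, y ≥ 0}`. -/
theorem gff_prefix_nonneg (w : List Letter) (hw : IsGFF w) :
    ∀ p : List Letter, p <+: w → 0 ≤ lat p ∧ 0 ≤ long p := by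
  induction hw with
  | base =>
    intro p hp
    rw [List.prefix_nil] at hp
    subst hp
    exact ⟨le_refl 0, le_refl 0⟩
  | nabla u v k h ih =>
    intro p hp
    simp only [List.append_assoc] at hp ih ⊢
    rcases prefix_split u hp with h1 | ⟨q, hq, rfl⟩
    · exact ih p (h1.trans (List.prefix_append u _))
    · have hu := ih u (List.prefix_append u _)
      rcases prefix_split [E] hq with h2 | ⟨r, hr, rfl⟩
      · rcases prefix_single h2 with rfl | rfl <;>
          constructor <;>
          simp only [lat_append, long_append, lat_nil, long_nil, lat_E, long_E] <;>
          linarith [hu.1, hu.2]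
      · rcases prefix_split (List.replicate k N) hr with h3 | ⟨s, hs, rfl⟩
        · obtain ⟨j, hj, rfl⟩ := prefix_replicate h3
          have hc := ih (u ++ List.replicate j N)
            ⟨List.replicate (k - j) N ++ v, by
              rw [List.append_assoc, ← List.append_assoc (List.replicate j N), repl_split hj]⟩
          constructor <;>
            simp only [lat_append, long_append, lat_repl_N, long_repl_N, lat_E, long_E] at hc ⊢ <;>
            linarith [hc.1, hc.2]
        · have hk := ih (u ++ List.replicate k N) ⟨v, by rw [List.append_assoc]⟩
          rcases prefix_split [W] hs with h4 | ⟨t, ht, rfl⟩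
          · rcases prefix_single h4 with rfl | rfl <;>
              constructor <;>
              simp only [lat_append, long_append, lat_repl_N, long_repl_N, lat_E, long_E,
                lat_W, long_W, lat_nil, long_nil] at hk ⊢ <;>
              linarith [hk.1, hk.2]
          · obtain ⟨t', rfl⟩ := ht
            have hc := ih (u ++ (List.replicate k N ++ t))
              ⟨t', by rw [List.append_assoc, List.append_assoc]⟩
            constructor <;>
              simp only [lat_append, long_append, lat_repl_N, long_repl_N, lat_E, long_E,
                lat_W, long_W] at hc ⊢ <;>
              linarith [hc.1, hc.2]
  | delta u v k h ih =>
    intro p hp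
    simp only [List.append_assoc] at hp ih ⊢
    rcases prefix_split u hp with h1 | ⟨q, hq, rfl⟩
    · exact ih p (h1.trans (List.prefix_append u _))
    · have hu := ih u (List.prefix_append u _)
      rcases prefix_split [N] hq with h2 | ⟨r, hr, rfl⟩
      · rcases prefix_single h2 with rfl | rfl <;>
          constructor <;>
          simp only [lat_append, long_append, lat_nil, long_nil, lat_Nl, long_Nl] <;>
          linarith [hu.1, hu.2]
      · rcases prefix_split (List.replicate k W) hr with h3 | ⟨s, hs, rfl⟩
        · obtain ⟨j, hj, rfl⟩ := prefix_replicate h3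
          have hc := ih (u ++ List.replicate j W)
            ⟨List.replicate (k - j) W ++ v, by
              rw [List.append_assoc, ← List.append_assoc (List.replicate j W), repl_split hj]⟩
          constructor <;>
            simp only [lat_append, long_append, lat_repl_W, long_repl_W, lat_Nl, long_Nl] at hc ⊢ <;>
            linarith [hc.1, hc.2]
        · have hk := ih (u ++ List.replicate k W) ⟨v, by rw [List.append_assoc]⟩
          rcases prefix_split [S] hs with h4 | ⟨t, ht, rfl⟩
          · rcases prefix_single h4 with rfl | rfl <;>
              constructor <;>
              simp only [lat_append, long_append, lat_repl_W, long_repl_W, lat_Nl, long_Nl,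
                lat_S, long_S, lat_nil, long_nil] at hk ⊢ <;>
              linarith [hk.1, hk.2]
          · obtain ⟨t', rfl⟩ := ht
            have hc := ih (u ++ (List.replicate k W ++ t))
              ⟨t', by rw [List.append_assoc, List.append_assoc]⟩
            constructor <;>
              simp only [lat_append, long_append, lat_repl_W, long_repl_W, lat_Nl, long_Nl,
                lat_S, long_S] at hc ⊢ <;>
              linarith [hc.1, hc.2]
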